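/- Let f : X → Y be a continuous map between compact metrizable spaces with every fiber of covering dimension at most k, and assume X and Y are C-spaces. Let ε > 0, let U, V be open subsets of X with disjoint closures, and let F ⊆ Y be closed. Then there exist families {U_p}, {V_p} of open subsets of X and {F_p} of closed subsets of Y, p ∈ ℕ, such that: (1) the closures of U_p and V_p are disjoint; (2) U_p ⊇ U ∩ f⁻¹(F_p) and V_p ⊇ V ∩ f⁻¹(F_p); (3) F ⊆ ⋃_p F_p and diam F_p < ε; (4) E_p = f⁻¹(F_p) ∖ (U_p ∪ V_p) admits an open cover of order ≤ k and mesh ≤ ε; (5) the family {E_p : p ∈ ℕ} is discrete in X. -/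

import Mathlib

open Set Topology

noncomputable section

namespace Paper

/-- Order of a family of sets at most `k`: no point belongs to more than `k` members. -/
def OrderLE {X : Type*} (c : Set (Set X)) (k : ℕ) : Prop :=
  ∀ x : X, {u ∈ c | x ∈ u}.Finite ∧ {u ∈ c | x ∈ u}.ncard ≤ k

/-- Covering dimension at most `n` (with `n : ℤ` so that `n = -1` means empty):
every open cover admits an open refinement, still covering, of order at most `n + 1`. -/
def CovDimLE (X : Type*) [TopologicalSpace X] (n : ℤ) : Prop :=
  ∀ c : Set (Set X), (∀ u ∈ c, IsOpen u) → ⋃₀ c = univ →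
    ∃ d : Set (Set X), (∀ v ∈ d, IsOpen v) ∧ ⋃₀ d = univ ∧
      (∀ v ∈ d, ∃ u ∈ c, v ⊆ u) ∧ OrderLE d (n + 1).toNat

/-- Covering dimension of a subset, via the subspace topology. -/
def DimLE {X : Type*} [TopologicalSpace X] (A : Set X) (n : ℤ) : Prop :=
  CovDimLE A n

/-- `T` separates `Z` between `B` and `C`: the complement `Z \ T` splits into two
disjoint relatively open pieces, one containing `Z ∩ B` and the other `Z ∩ C`. -/
def Separates {X : Type*} [TopologicalSpace X] (Z T B C : Set X) : Prop :=
  ∃ U V : Set X, IsOpen U ∧ IsOpen V ∧ Z \ T ⊆ U ∪ V ∧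
    Disjoint (U ∩ (Z \ T)) (V ∩ (Z \ T)) ∧ Z ∩ B ⊆ U ∩ (Z \ T) ∧ Z ∩ C ⊆ V ∩ (Z \ T)

/-- `A` is σ-compact: a countable union of compact sets. -/
def IsSigmaCompact' {X : Type*} [TopologicalSpace X] (A : Set X) : Prop :=
  ∃ K : ℕ → Set X, (∀ n, IsCompact (K n)) ∧ A = ⋃ n, K n

/-- A C-space (property C). -/
def CSpace (X : Type*) [TopologicalSpace X] : Prop :=
  ∀ α : ℕ → Set (Set X), (∀ n, (∀ u ∈ α n, IsOpen u) ∧ ⋃₀ α n = univ) →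
    ∃ μ : ℕ → Set (Set X),
      (∀ n, (∀ u ∈ μ n, IsOpen u) ∧ (μ n).PairwiseDisjoint id ∧
        ∀ u ∈ μ n, ∃ v ∈ α n, u ⊆ v) ∧
      ⋃₀ (⋃ n, μ n) = univ

/-- A family of sets is discrete in `X`: every point has a neighborhood
meeting at most one member of the family. -/
def DiscreteFamily {X : Type*} [TopologicalSpace X] (E : ℕ → Set X) : Prop :=
  ∀ x : X, ∃ W ∈ 𝓝 x, {p : ℕ | (W ∩ E p).Nonempty}.Subsingleton

/-- `E` admits a cover by open subsets of `X` of order ≤ `k` and mesh ≤ `ε`. -/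
def AdmitsSmallCover {X : Type*} [MetricSpace X] (E : Set X) (k : ℕ) (ε : ℝ) : Prop :=
  ∃ c : Set (Set X), (∀ u ∈ c, IsOpen u) ∧ E ⊆ ⋃₀ c ∧
    (∀ u ∈ c, Metric.diam u ≤ ε) ∧ OrderLE c k

/-- The unit cube `[0,1]^k`. -/
abbrev Cube (k : ℕ) : Type := Fin k → Set.Icc (0 : ℝ) 1

/-- A simplicial map between (geometric) simplicial complexes: it sends the vertex set
of each face onto the vertex set of a face and is affine on each closed simplex. -/
def IsSimplicialMap {E F : Type*} [AddCommGroup E] [Module ℝ E] [AddCommGroup F] [Module ℝ F]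
    (K : Geometry.SimplicialComplex ℝ E) (L : Geometry.SimplicialComplex ℝ F)
    (p : E → F) : Prop :=
  ∀ s ∈ K.faces, (∃ t ∈ L.faces, p '' (s : Set E) = (t : Set F)) ∧
    ∃ g : E →ᵃ[ℝ] F, ∀ x ∈ convexHull ℝ (s : Set E), p x = g x

/-- An `ω`-map relative to a subset `S` of the target: a continuous map such that the
preimage of some open cover of `S` refines `ω`. -/
def IsOmegaMapOn {X P : Type*} [TopologicalSpace X] [TopologicalSpace P]
    (κ : X → P) (S : Set P) (ω : Set (Set X)) : Prop :=
  Continuous κ ∧ ∃ c : Set (Set P), (∀ u ∈ c, IsOpen u) ∧ S ⊆ ⋃₀ c ∧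
    ∀ u ∈ c, ∃ w ∈ ω, κ ⁻¹' u ⊆ w

/-- `f` admits approximation by `k`-dimensional simplicial maps. -/
def AdmitsApprox {X Y : Type*} [TopologicalSpace X] [TopologicalSpace Y]
    (f : X → Y) (k : ℕ) : Prop :=
  ∀ ωX : Set (Set X), (∀ u ∈ ωX, IsOpen u) → ⋃₀ ωX = univ →
  ∀ ωY : Set (Set Y), (∀ u ∈ ωY, IsOpen u) → ⋃₀ ωY = univ →
    ∃ (n m : ℕ) (K : Geometry.SimplicialComplex ℝ (Fin n → ℝ))
      (L : Geometry.SimplicialComplex ℝ (Fin m → ℝ))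
      (κX : X → (Fin n → ℝ)) (κY : Y → (Fin m → ℝ)) (p : (Fin n → ℝ) → (Fin m → ℝ)),
      range κX ⊆ K.space ∧ range κY ⊆ L.space ∧
      IsOmegaMapOn κX K.space ωX ∧ IsOmegaMapOn κY L.space ωY ∧
      IsSimplicialMap K L p ∧ (∀ x, p (κX x) = κY (f x)) ∧
      ∀ z : Fin m → ℝ, DimLE {x | x ∈ K.space ∧ p x = z} (k : ℤ)

/-- The open star of a vertex `a` in a simplicial complex `K`: the points of `|K|`
not lying in any closed simplex missing `a`. -/
def openStar {E : Type*} [AddCommGroup E] [Module ℝ E]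
    (K : Geometry.SimplicialComplex ℝ E) (a : E) : Set E :=
  K.space \ ⋃ s ∈ {s ∈ K.faces | a ∉ s}, convexHull ℝ (s : Set E)

end Paper
section Helpers
open Set Topology Metric

variable {X : Type*} [MetricSpace X]

/-- A finite set of positive reals has a positive lower bound. -/
lemma exists_pos_forall_le {α : Type*} (s : Finset α) (ρ : α → ℝ)
    (h : ∀ a ∈ s, 0 < ρ a) : ∃ r : ℝ, 0 < r ∧ ∀ a ∈ s, r ≤ ρ a := by
  classical
  induction s using Finset.induction with
  | empty => exact ⟨1, one_pos, by simp⟩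
  | @insert a s ha ih =>
    obtain ⟨r, hr, hrle⟩ := ih (fun b hb => h b (Finset.mem_insert_of_mem hb))
    refine ⟨min r (ρ a), lt_min hr (h a (Finset.mem_insert_self a s)), ?_⟩
    intro b hb
    rcases Finset.mem_insert.1 hb with rfl | hb
    · exact min_le_right _ _
    · exact le_trans (min_le_left _ _) (hrle b hb)

/-- If finitely many closed sets have empty intersection in a compact metric space,
then some thickenings of them still have empty intersection. -/
lemma exists_thickening_iInter_empty [CompactSpace X] {ι : Type*} (S : ι → Set X)
    (T : Finset ι) (hcl : ∀ i, IsClosed (S i))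
    (h : ⋂ i ∈ T, S i = ∅) :
    ∃ r : ℝ, 0 < r ∧ ⋂ i ∈ T, thickening r (S i) = ∅ := by
  classical
  have hcov : (univ : Set X) ⊆ ⋃ i : T, (S i.1)ᶜ := by
    intro x _
    have hx : x ∉ ⋂ i ∈ T, S i := by rw [h]; exact notMem_empty x
    simp only [mem_iInter, not_forall] at hx
    obtain ⟨i, hi, hx⟩ := hx
    exact mem_iUnion.2 ⟨⟨i, hi⟩, hx⟩
  obtain ⟨δ, hδ, hball⟩ := lebesgue_number_lemma_of_metric isCompact_univ
    (fun i : T => (hcl i.1).isOpen_compl) hcov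
  refine ⟨δ, hδ, ?_⟩
  ext x
  simp only [mem_iInter, mem_empty_iff_false, iff_false, not_forall]
  obtain ⟨i, hi⟩ := hball x (mem_univ x)
  refine ⟨i.1, i.2, fun hx => ?_⟩
  obtain ⟨z, hz, hdz⟩ := mem_thickening_iff.1 hx
  exact hi (by simpa [mem_ball, dist_comm] using hdz) hz

/-- Order of an indexed family, via index counting. -/
lemma orderLE_range {κ : Type*} [Fintype κ] (g : κ → Set X) (k : ℕ)
    (h : ∀ x : X, {i : κ | x ∈ g i}.ncard ≤ k) :
    Paper.OrderLE (Set.range g) k := by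
  intro x
  have hsub : {u ∈ Set.range g | x ∈ u} ⊆ Set.range g := fun u hu => hu.1
  have hfin : {u ∈ Set.range g | x ∈ u}.Finite := (Set.finite_range g).subset hsub
  refine ⟨hfin, ?_⟩
  have himg : {u ∈ Set.range g | x ∈ u} = g '' {i : κ | x ∈ g i} := by
    ext u
    constructor
    · rintro ⟨⟨i, rfl⟩, hx⟩; exact ⟨i, hx, rfl⟩
    · rintro ⟨i, hx, rfl⟩; exact ⟨⟨i, rfl⟩, hx⟩
  rw [himg]
  exact le_trans (Set.ncard_image_le (Set.toFinite _)) (h x)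

end Helpers
section Grid
open Set Topology Metric Finset

/-- Level used for partitions. -/
def tlev (k : ℕ) : ℝ := 1/(2*((k:ℝ)+1))
/-- Half-width of the slab. -/
def etak (k : ℕ) : ℝ := 1/(16*((k:ℝ)+1))
/-- Perturbation parameter. -/
def gamk (k : ℕ) : ℝ := 1/(8*((k:ℝ)+1)^3)
/-- Threshold for the star cover. -/
def thetak (k : ℕ) : ℝ := 1/((k:ℝ)+1) - gamk k

lemma K1_pos (k : ℕ) : 0 < (k:ℝ)+1 := by positivity
lemma K1_ge_one (k : ℕ) : 1 ≤ (k:ℝ)+1 := by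
  have : (0:ℝ) ≤ k := Nat.cast_nonneg k
  linarith
lemma gamk_pos (k : ℕ) : 0 < gamk k := by unfold gamk; positivity
lemma etak_pos (k : ℕ) : 0 < etak k := by unfold etak; positivity
lemma thetak_pos (k : ℕ) : 0 < thetak k := by
  unfold thetak gamk
  have h1 := K1_ge_one k
  have h0 := K1_pos k
  rw [div_sub_div _ _ (by positivity) (by positivity : (8:ℝ)*((k:ℝ)+1)^3 ≠ 0)]
  apply div_pos
  · nlinarith [sq_nonneg ((k:ℝ)+1), mul_pos h0 h0, mul_pos (mul_pos h0 h0) h0]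
  · positivity
lemma tlev_pos (k : ℕ) : 0 < tlev k := by unfold tlev; positivity
lemma tlev_add_etak_le_one (k : ℕ) : tlev k + etak k ≤ 1 := by
  unfold tlev etak
  have h1 := K1_ge_one k
  have h0 := K1_pos k
  rw [div_add_div _ _ (by positivity) (by positivity : (16:ℝ)*((k:ℝ)+1) ≠ 0)]
  rw [div_le_one (by positivity)]
  nlinarith
lemma etak_lt_tlev (k : ℕ) : etak k < tlev k := by
  unfold tlev etak
  have h0 := K1_pos k
  apply div_lt_div_of_pos_left one_pos (by positivity)
  nlinarith

lemma K1_mul_thetak_lt_one (k : ℕ) : ((k:ℝ)+1) * thetak k < 1 := by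
  unfold thetak
  have h0 := K1_pos k
  have hγ := gamk_pos k
  have h1 : ((k:ℝ)+1) * (1/((k:ℝ)+1)) = 1 := mul_one_div_cancel (ne_of_gt h0)
  nlinarith [mul_pos h0 hγ]

set_option maxHeartbeats 1000000 in
/-- The key combinatorial estimate: if `k+1` of the `ψ i` exceed the threshold,
then the weighted difference is far from the level `tlev k`. -/
lemma grid_estimate {ι : Type*} [Fintype ι] (k : ℕ) (ψ : ι → ℝ)
    (hnn : ∀ i, 0 ≤ ψ i) (hsum : ∑ i, ψ i = 1)
    (IA IB : Finset ι) (hdisj : Disjoint IA IB)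
    (T : Finset ι) (hT : T.card = k + 1)
    (hθ : ∀ i ∈ T, thetak k < ψ i) :
    2 * etak k ≤ |(∑ i ∈ IA, ψ i - ∑ i ∈ IB, ψ i) - tlev k| := by
  classical
  set K1 : ℝ := (k:ℝ)+1 with hK1def
  have hK1 : 0 < K1 := K1_pos k
  have hK1' : 1 ≤ K1 := K1_ge_one k
  set γ : ℝ := gamk k with hγdef
  have hγ : 0 < γ := gamk_pos k
  have hγval : γ = 1/(8*K1^3) := rfl
  set θ : ℝ := thetak k with hθdef
  have hθval : θ = 1/K1 - γ := rfl
  have hTne : T.Nonempty := Finset.card_pos.1 (by omega)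
  -- lower bound for the sum over T
  have hlt : K1 * θ < ∑ i ∈ T, ψ i := by
    have h := Finset.sum_lt_sum_of_nonempty hTne hθ
    have h2 : ∑ _i ∈ T, θ = (T.card : ℝ) * θ := by
      rw [Finset.sum_const, nsmul_eq_mul]
    rw [h2, hT] at h
    have : ((k+1 : ℕ) : ℝ) = K1 := by push_cast; rfl
    rwa [this] at h
  have hsumT_le : ∑ i ∈ T, ψ i ≤ 1 := by
    rw [← hsum]
    exact Finset.sum_le_sum_of_subset_of_nonneg (Finset.subset_univ T)
      (fun i _ _ => hnn i)
  set R : ℝ := ∑ i ∈ Finset.univ \ T, ψ i with hRdef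
  have hsplit : R + ∑ i ∈ T, ψ i = 1 := by
    rw [hRdef, Finset.sum_sdiff (Finset.subset_univ T), hsum]
  have hR0 : 0 ≤ R := Finset.sum_nonneg (fun i _ => hnn i)
  have hRlt : R < K1 * γ := by
    have hKθ : K1 * θ = 1 - K1 * γ := by
      rw [hθval]; field_simp
    nlinarith
  clear_value K1 γ θ
  -- pointwise bounds on T
  have habs : ∀ i ∈ T, |ψ i - 1/K1| ≤ K1 * γ := by
    intro i hi
    have hcard : (T.erase i).card = k := by rw [Finset.card_erase_of_mem hi, hT]; omega
    have h1 : (k:ℝ) * θ ≤ ∑ j ∈ T.erase i, ψ j := by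
      have h : ∑ _j ∈ T.erase i, θ ≤ ∑ j ∈ T.erase i, ψ j :=
        Finset.sum_le_sum (fun j hj => le_of_lt (hθ j (Finset.mem_of_mem_erase hj)))
      rwa [Finset.sum_const, hcard, nsmul_eq_mul] at h
    have h2 : ψ i + ∑ j ∈ T.erase i, ψ j = ∑ j ∈ T, ψ j :=
      Finset.add_sum_erase T ψ hi
    have hup : ψ i ≤ 1 - (k:ℝ) * θ := by linarith
    have hlo : θ < ψ i := hθ i hi
    rw [abs_le]
    constructor
    · have : θ - 1/K1 = -γ := by rw [hθval]; ring
      nlinarith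
    · have hkθ : 1 - (k:ℝ)*θ - 1/K1 = (k:ℝ)*γ := by
        rw [hθval]
        have : (k:ℝ) = K1 - 1 := by rw [hK1def]; ring
        field_simp [this]
        linarith
      nlinarith
  -- split the sums
  have hsplitA : ∑ i ∈ IA ∩ T, ψ i + ∑ i ∈ IA \ T, ψ i = ∑ i ∈ IA, ψ i :=
    Finset.sum_inter_add_sum_sdiff IA T ψ
  have hsplitB : ∑ i ∈ IB ∩ T, ψ i + ∑ i ∈ IB \ T, ψ i = ∑ i ∈ IB, ψ i :=
    Finset.sum_inter_add_sum_sdiff IB T ψ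
  set a : ℕ := (IA ∩ T).card with hadef
  set b : ℕ := (IB ∩ T).card with hbdef
  have hA1 : |∑ i ∈ IA ∩ T, ψ i - (a:ℝ)/K1| ≤ (a:ℝ) * (K1 * γ) := by
    have he : ∑ i ∈ IA ∩ T, ψ i - (a:ℝ)/K1 = ∑ i ∈ IA ∩ T, (ψ i - 1/K1) := by
      rw [Finset.sum_sub_distrib, Finset.sum_const, nsmul_eq_mul]
      ring
    rw [he]
    calc |∑ i ∈ IA ∩ T, (ψ i - 1/K1)| ≤ ∑ i ∈ IA ∩ T, |ψ i - 1/K1| :=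
          Finset.abs_sum_le_sum_abs _ _
      _ ≤ ∑ _i ∈ IA ∩ T, (K1 * γ) :=
          Finset.sum_le_sum (fun i hi => habs i (Finset.mem_of_mem_inter_right hi))
      _ = (a:ℝ) * (K1 * γ) := by rw [Finset.sum_const, nsmul_eq_mul]
  have hB1 : |∑ i ∈ IB ∩ T, ψ i - (b:ℝ)/K1| ≤ (b:ℝ) * (K1 * γ) := by
    have he : ∑ i ∈ IB ∩ T, ψ i - (b:ℝ)/K1 = ∑ i ∈ IB ∩ T, (ψ i - 1/K1) := by
      rw [Finset.sum_sub_distrib, Finset.sum_const, nsmul_eq_mul]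
      ring
    rw [he]
    calc |∑ i ∈ IB ∩ T, (ψ i - 1/K1)| ≤ ∑ i ∈ IB ∩ T, |ψ i - 1/K1| :=
          Finset.abs_sum_le_sum_abs _ _
      _ ≤ ∑ _i ∈ IB ∩ T, (K1 * γ) :=
          Finset.sum_le_sum (fun i hi => habs i (Finset.mem_of_mem_inter_right hi))
      _ = (b:ℝ) * (K1 * γ) := by rw [Finset.sum_const, nsmul_eq_mul]
  have hADnn : 0 ≤ ∑ i ∈ IA \ T, ψ i := Finset.sum_nonneg (fun i _ => hnn i)
  have hBDnn : 0 ≤ ∑ i ∈ IB \ T, ψ i := Finset.sum_nonneg (fun i _ => hnn i)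
  have hdisjAB : Disjoint (IA \ T) (IB \ T) :=
    Finset.disjoint_of_subset_left (Finset.sdiff_subset)
      (Finset.disjoint_of_subset_right (Finset.sdiff_subset) hdisj)
  have habsum : ∑ i ∈ IA \ T, ψ i + ∑ i ∈ IB \ T, ψ i ≤ R := by
    rw [← Finset.sum_union hdisjAB]
    apply Finset.sum_le_sum_of_subset_of_nonneg
    · intro i hi
      rcases Finset.mem_union.1 hi with h | h
      · exact Finset.mem_sdiff.2 ⟨Finset.mem_univ i, (Finset.mem_sdiff.1 h).2⟩
      · exact Finset.mem_sdiff.2 ⟨Finset.mem_univ i, (Finset.mem_sdiff.1 h).2⟩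
    · exact fun i _ _ => hnn i
  have hab : (a:ℝ) + (b:ℝ) ≤ K1 := by
    have hd : Disjoint (IA ∩ T) (IB ∩ T) :=
      Finset.disjoint_of_subset_left (Finset.inter_subset_left)
        (Finset.disjoint_of_subset_right (Finset.inter_subset_left) hdisj)
    have hc : ((IA ∩ T) ∪ (IB ∩ T)).card = a + b := Finset.card_union_of_disjoint hd
    have hsub : (IA ∩ T) ∪ (IB ∩ T) ⊆ T := by
      intro i hi
      rcases Finset.mem_union.1 hi with h | h
      · exact (Finset.mem_inter.1 h).2
      · exact (Finset.mem_inter.1 h).2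
    have := Finset.card_le_card hsub
    rw [hc, hT] at this
    have : ((a + b : ℕ) : ℝ) ≤ ((k+1 : ℕ) : ℝ) := Nat.cast_le.2 this
    push_cast at this
    linarith
  -- the main estimates
  set D : ℝ := (∑ i ∈ IA, ψ i) - (∑ i ∈ IB, ψ i) with hDdef
  have key1 : |D - ((a:ℝ) - (b:ℝ))/K1| ≤ K1 * (K1 * γ) + R := by
    have hidD : D - ((a:ℝ) - (b:ℝ))/K1 =
        ((∑ i ∈ IA ∩ T, ψ i - (a:ℝ)/K1) - (∑ i ∈ IB ∩ T, ψ i - (b:ℝ)/K1))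
          + (∑ i ∈ IA \ T, ψ i - ∑ i ∈ IB \ T, ψ i) := by
      rw [hDdef, ← hsplitA, ← hsplitB]; ring
    rw [hidD]
    have h1 : |(∑ i ∈ IA ∩ T, ψ i - (a:ℝ)/K1) - (∑ i ∈ IB ∩ T, ψ i - (b:ℝ)/K1)|
        ≤ (a:ℝ) * (K1*γ) + (b:ℝ) * (K1*γ) := by
      calc _ ≤ |∑ i ∈ IA ∩ T, ψ i - (a:ℝ)/K1| + |∑ i ∈ IB ∩ T, ψ i - (b:ℝ)/K1| :=
            abs_sub _ _
        _ ≤ _ := add_le_add hA1 hB1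
    have h2 : |∑ i ∈ IA \ T, ψ i - ∑ i ∈ IB \ T, ψ i| ≤ R := by
      rw [abs_le]
      constructor <;> nlinarith
    calc _ ≤ |(∑ i ∈ IA ∩ T, ψ i - (a:ℝ)/K1) - (∑ i ∈ IB ∩ T, ψ i - (b:ℝ)/K1)|
          + |∑ i ∈ IA \ T, ψ i - ∑ i ∈ IB \ T, ψ i| := abs_add_le _ _
      _ ≤ ((a:ℝ) * (K1*γ) + (b:ℝ) * (K1*γ)) + R := add_le_add h1 h2
      _ ≤ K1 * (K1 * γ) + R := by nlinarith
  have key2 : 1/(2*K1) ≤ |tlev k - ((a:ℝ) - (b:ℝ))/K1| := by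
    have hj : ∃ m : ℤ, (a:ℝ) - (b:ℝ) = (m:ℝ) := ⟨(a:ℤ) - (b:ℤ), by push_cast; ring⟩
    obtain ⟨m, hm⟩ := hj
    have hid : tlev k - ((a:ℝ) - (b:ℝ))/K1 = (1 - 2*(m:ℝ))/(2*K1) := by
      rw [hm]
      unfold tlev
      rw [hK1def.symm]
      field_simp
    rw [hid, abs_div, abs_of_pos (by positivity : (0:ℝ) < 2*K1)]
    have hz : (1:ℤ) ≤ |1 - 2*m| := by
      rcases abs_cases (1 - 2*m) with ⟨h,_⟩ | ⟨h,_⟩ <;> omega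
    have hz' : (1:ℝ) ≤ |1 - 2*(m:ℝ)| := by exact_mod_cast hz
    calc 1/(2*K1) = 1 * (1/(2*K1)) := by ring
      _ ≤ |1 - 2*(m:ℝ)| * (1/(2*K1)) := by
          apply mul_le_mul_of_nonneg_right hz' (by positivity)
      _ = |1 - 2*(m:ℝ)| / (2*K1) := by ring
  -- combine
  set g : ℝ := ((a:ℝ) - (b:ℝ))/K1 with hgdef
  have htri : |tlev k - g| - |D - g| ≤ |D - tlev k| := by
    have h := abs_sub_abs_le_abs_sub (tlev k - g) (D - g)
    have he : (tlev k - g) - (D - g) = tlev k - D := by ring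
    rw [he] at h
    calc |tlev k - g| - |D - g| ≤ |tlev k - D| := h
      _ = |D - tlev k| := abs_sub_comm _ _
  have eg1 : K1 * (K1 * γ) = 1/(8*K1) := by
    rw [hγval]; field_simp
  have eg2 : K1 * γ ≤ 1/(8*K1) := by
    have h1 : K1 * γ = 1/(8*K1^2) := by rw [hγval]; field_simp
    rw [h1]
    apply one_div_le_one_div_of_le (by positivity)
    nlinarith
  have eeta : 2 * etak k = 1/(8*K1) := by
    unfold etak; rw [← hK1def]; field_simp; ring
  have e3 : 1/(2*K1) = 4 * (1/(8*K1)) := by field_simp; ring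
  linarith
end Grid
section Package
open Set Topology Metric

set_option maxHeartbeats 2000000 in
/-- Local package: separation with a small-order wall cover over a small closed ball. -/
lemma package {X Y : Type*} [MetricSpace X] [CompactSpace X] [MetricSpace Y]
    (f : X → Y) (hf : Continuous f) (k : ℕ) (y : Y)
    (hdimy : Paper.DimLE (f ⁻¹' {y}) (k : ℤ))
    (A B : Set X) (hA : IsClosed A) (hB : IsClosed B) (hAB : Disjoint A B)
    (ε : ℝ) (hε : 0 < ε) :
    ∃ (δ : ℝ) (U' V' : Set X) (c : Set (Set X)), 0 < δ ∧ δ ≤ ε/4 ∧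
      IsOpen U' ∧ IsOpen V' ∧ Disjoint (closure U') (closure V') ∧
      (∀ u ∈ c, IsOpen u) ∧ (∀ u ∈ c, Metric.diam u ≤ ε) ∧ Paper.OrderLE c k ∧
      A ∩ f ⁻¹' (Metric.closedBall y δ) ⊆ U' ∧
      B ∩ f ⁻¹' (Metric.closedBall y δ) ⊆ V' ∧
      f ⁻¹' (Metric.closedBall y δ) \ (U' ∪ V') ⊆ ⋃₀ c := by
  classical
  set Z : Set X := f ⁻¹' {y} with hZdef
  have hZcl : IsClosed Z := isClosed_singleton.preimage hf
  have hZcomp : IsCompact Z := hZcl.isCompact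
  -- separation distance between A and B
  obtain ⟨dAB, hdAB, hthick⟩ := hAB.exists_thickenings hA.isCompact hB
  have hsep : ∀ a ∈ A, ∀ b ∈ B, dAB ≤ dist a b := by
    intro a ha b hb
    by_contra hcon
    push_neg at hcon
    have h1 : b ∈ thickening dAB A :=
      mem_thickening_iff.2 ⟨a, ha, by rwa [dist_comm]⟩
    have h2 : b ∈ thickening dAB B := self_subset_thickening hdAB _ hb
    exact (hthick.le_bot ⟨h1, h2⟩ : False)
  set δ₀ : ℝ := min (ε/4) (dAB/2) with hδ₀def
  have hδ₀pos : 0 < δ₀ := lt_min (by linarith) (by linarith)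
  have hδ₀ε : δ₀ ≤ ε/4 := min_le_left _ _
  have hδ₀d : δ₀ < dAB := lt_of_le_of_lt (min_le_right _ _) (by linarith)
  -- a small-mesh, small-order cover of the fiber
  have hcompZ : CompactSpace Z := isCompact_iff_compactSpace.mp hZcomp
  set c₀ : Set (Set Z) := {u | ∃ z : Z, u = Metric.ball z (δ₀/2)} with hc₀def
  obtain ⟨d, hdo, hdcov, hdref, hdord⟩ := hdimy c₀
    (by rintro u ⟨z, rfl⟩; exact isOpen_ball)
    (by
      apply Set.eq_univ_of_forall
      intro z
      exact ⟨Metric.ball z (δ₀/2), ⟨z, rfl⟩, mem_ball_self (by positivity)⟩)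
  have hdord' : Paper.OrderLE d (k+1) := by
    have : (((k : ℤ)) + 1).toNat = k + 1 := by omega
    rwa [this] at hdord
  -- finite subcover
  obtain ⟨t, ht⟩ := isCompact_univ.elim_finite_subcover (fun u : d => (u : Set Z))
    (fun u => hdo u u.2)
    (by rw [← sUnion_eq_iUnion, hdcov])
  set ws : Finset (Set Z) := t.image Subtype.val with hwsdef
  have hwsd : ∀ u ∈ ws, u ∈ d := by
    intro u hu
    obtain ⟨i, _, rfl⟩ := Finset.mem_image.1 hu
    exact i.2
  have hwscov : ∀ z : Z, ∃ u ∈ ws, z ∈ u := by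
    intro z
    have := ht (mem_univ z)
    simp only [mem_iUnion] at this
    obtain ⟨i, hit, hzi⟩ := this
    exact ⟨i.1, Finset.mem_image.2 ⟨i, hit, rfl⟩, hzi⟩
  -- X-open representatives
  have hop : ∀ i : ws, ∃ Uo : Set X, IsOpen Uo ∧ Subtype.val ⁻¹' Uo = (i : Set Z) := by
    intro i
    have := hdo i (hwsd i i.2)
    rwa [isOpen_induced_iff] at this
  choose Uo hUoOpen hUoeq using hop
  set Tt : ws → Set X := fun i => Z ∩ Uo i with hTtdef
  have hTZ : ∀ i, Tt i ⊆ Z := fun i => inter_subset_left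
  have hmemT : ∀ (x : X) (hx : x ∈ Z) (i : ws),
      x ∈ Tt i ↔ (⟨x, hx⟩ : Z) ∈ (i : Set Z) := by
    intro x hx i
    rw [← hUoeq i]
    constructor
    · rintro ⟨-, hxu⟩; exact hxu
    · intro h; exact ⟨hx, h⟩
  -- smallness of the pieces
  have hTsmall : ∀ i : ws, ∀ a ∈ Tt i, ∀ b ∈ Tt i, dist a b ≤ δ₀ := by
    intro i a ha b hb
    obtain ⟨u, hu, hiu⟩ := hdref i (hwsd i i.2)
    obtain ⟨z₀, rfl⟩ := hu
    have ha' : (⟨a, hTZ i ha⟩ : Z) ∈ Metric.ball z₀ (δ₀/2) :=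
      hiu ((hmemT a (hTZ i ha) i).1 ha)
    have hb' : (⟨b, hTZ i hb⟩ : Z) ∈ Metric.ball z₀ (δ₀/2) :=
      hiu ((hmemT b (hTZ i hb) i).1 hb)
    rw [mem_ball, Subtype.dist_eq] at ha' hb'
    calc dist a b ≤ dist a (z₀ : X) + dist (z₀ : X) b := dist_triangle _ _ _
      _ ≤ δ₀/2 + δ₀/2 := by
          rw [dist_comm (z₀ : X) b]
          exact add_le_add (le_of_lt ha') (le_of_lt hb')
      _ = δ₀ := by ring
  -- order of the pieces
  have hTord : ∀ x ∈ Z, ({i : ws | x ∈ Tt i}).ncard ≤ k + 1 := by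
    intro x hx
    obtain ⟨hfin, hcard⟩ := hdord' (⟨x, hx⟩ : Z)
    have himg : (fun i : ws => (i : Set Z)) '' {i : ws | x ∈ Tt i}
        ⊆ {u ∈ d | (⟨x, hx⟩ : Z) ∈ u} := by
      rintro u ⟨i, hi, rfl⟩
      exact ⟨hwsd i i.2, (hmemT x hx i).1 hi⟩
    have hinj : Function.Injective (fun i : ws => (i : Set Z)) := Subtype.val_injective
    calc ({i : ws | x ∈ Tt i}).ncard
        = ((fun i : ws => (i : Set Z)) '' {i : ws | x ∈ Tt i}).ncard :=
          (Set.ncard_image_of_injective _ hinj).symm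
      _ ≤ ({u ∈ d | (⟨x, hx⟩ : Z) ∈ u}).ncard := Set.ncard_le_ncard himg hfin
      _ ≤ k + 1 := hcard
  -- bump functions
  set lam : ws → X → ℝ := fun i x =>
    if h : (Z \ Tt i).Nonempty then infDist x (Z \ Tt i) else 1 with hlamdef
  have hclosedZT : ∀ i : ws, IsClosed (Z \ Tt i) := by
    intro i
    have he : Z \ Tt i = Z ∩ (Uo i)ᶜ := by
      ext x
      simp only [hTtdef, mem_diff, mem_inter_iff, mem_compl_iff]
      tauto
    rw [he]
    exact hZcl.inter (hUoOpen i).isClosed_compl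
  have hlamcont : ∀ i, Continuous (lam i) := by
    intro i
    by_cases h : (Z \ Tt i).Nonempty
    · simp only [hlamdef, dif_pos h]
      exact continuous_infDist_pt (s := Z \ Tt i)
    · simp only [hlamdef, dif_neg h]
      exact continuous_const
  have hlamnn : ∀ i x, 0 ≤ lam i x := by
    intro i x
    by_cases h : (Z \ Tt i).Nonempty
    · simp only [hlamdef, dif_pos h]; exact infDist_nonneg
    · simp only [hlamdef, dif_neg h]; exact zero_le_one
  have hlam_pos_iff : ∀ (i : ws) (x : X), x ∈ Z → (0 < lam i x ↔ x ∈ Tt i) := by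
    intro i x hx
    by_cases h : (Z \ Tt i).Nonempty
    · simp only [hlamdef, dif_pos h]
      rw [← (hclosedZT i).notMem_iff_infDist_pos h]
      constructor
      · intro hn
        by_contra hnot
        exact hn ⟨hx, hnot⟩
      · rintro hT ⟨-, hnT⟩
        exact hnT hT
    · simp only [hlamdef, dif_neg h]
      rw [not_nonempty_iff_eq_empty, diff_eq_empty] at h
      simp only [zero_lt_one, true_iff]
      exact h hx
  set Slam : X → ℝ := fun x => ∑ i, lam i x with hSlamdef
  have hSlamcont : Continuous Slam := continuous_finset_sum _ (fun i _ => hlamcont i)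
  have hSlamnn : ∀ x, 0 ≤ Slam x := fun x => Finset.sum_nonneg (fun i _ => hlamnn i x)
  have hSlampos : ∀ x ∈ Z, 0 < Slam x := by
    intro x hx
    obtain ⟨u, hu, hzu⟩ := hwscov ⟨x, hx⟩
    have : x ∈ Tt ⟨u, hu⟩ := (hmemT x hx ⟨u, hu⟩).2 hzu
    exact Finset.sum_pos' (fun i _ => hlamnn i x)
      ⟨⟨u, hu⟩, Finset.mem_univ _, (hlam_pos_iff ⟨u, hu⟩ x hx).2 this⟩
  -- the two vertex classes
  set IA : Finset ws := Finset.univ.filter (fun i => (Tt i ∩ A).Nonempty) with hIAdef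
  set IB : Finset ws := Finset.univ.filter (fun i => (Tt i ∩ B).Nonempty) with hIBdef
  have hIAB : Disjoint IA IB := by
    rw [Finset.disjoint_left]
    intro i hiA hiB
    obtain ⟨a, haT, haA⟩ := (Finset.mem_filter.1 hiA).2
    obtain ⟨b, hbT, hbB⟩ := (Finset.mem_filter.1 hiB).2
    have := hsep a haA b hbB
    have := hTsmall i a haT b hbT
    linarith
  set num : X → ℝ := fun x => (∑ i ∈ IA, lam i x) - ∑ i ∈ IB, lam i x with hnumdef
  have hnumcont : Continuous num := by
    apply Continuous.sub <;> exact continuous_finset_sum _ (fun i _ => hlamcont i)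
  -- sums on A ∩ Z and B ∩ Z
  have hnumA : ∀ x ∈ A ∩ Z, num x = Slam x := by
    rintro x ⟨hxA, hxZ⟩
    have hz : ∀ i : ws, i ∉ IA → lam i x = 0 := by
      intro i hi
      by_contra hne
      have hpos : 0 < lam i x := lt_of_le_of_ne (hlamnn i x) (Ne.symm hne)
      have : x ∈ Tt i := (hlam_pos_iff i x hxZ).1 hpos
      exact hi (Finset.mem_filter.2 ⟨Finset.mem_univ _, ⟨x, this, hxA⟩⟩)
    have h1 : ∑ i ∈ IA, lam i x = Slam x :=
      Finset.sum_subset (Finset.subset_univ IA) (fun i _ hni => hz i hni)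
    have h2 : ∑ i ∈ IB, lam i x = 0 :=
      Finset.sum_eq_zero (fun i hi => hz i (Finset.disjoint_right.1 hIAB hi))
    simp only [hnumdef, h1, h2, sub_zero]
  have hnumB : ∀ x ∈ B ∩ Z, num x = -Slam x := by
    rintro x ⟨hxB, hxZ⟩
    have hz : ∀ i : ws, i ∉ IB → lam i x = 0 := by
      intro i hi
      by_contra hne
      have hpos : 0 < lam i x := lt_of_le_of_ne (hlamnn i x) (Ne.symm hne)
      have : x ∈ Tt i := (hlam_pos_iff i x hxZ).1 hpos
      exact hi (Finset.mem_filter.2 ⟨Finset.mem_univ _, ⟨x, this, hxB⟩⟩)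
    have h1 : ∑ i ∈ IB, lam i x = Slam x :=
      Finset.sum_subset (Finset.subset_univ IB) (fun i _ hni => hz i hni)
    have h2 : ∑ i ∈ IA, lam i x = 0 :=
      Finset.sum_eq_zero (fun i hi => hz i (Finset.disjoint_left.1 hIAB hi))
    simp only [hnumdef, h1, h2, zero_sub]
  -- the two sides
  set KU : Set X := {x | x ∈ Z ∧ (tlev k + etak k) * Slam x ≤ num x} with hKUdef
  set KV : Set X := {x | x ∈ Z ∧ num x ≤ (tlev k - etak k) * Slam x} with hKVdef
  have hKUcl : IsClosed KU := by
    have : KU = Z ∩ {x | (tlev k + etak k) * Slam x ≤ num x} := rfl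
    rw [this]
    exact hZcl.inter (isClosed_le (by fun_prop) hnumcont)
  have hKVcl : IsClosed KV := by
    have : KV = Z ∩ {x | num x ≤ (tlev k - etak k) * Slam x} := rfl
    rw [this]
    exact hZcl.inter (isClosed_le hnumcont (by fun_prop))
  have hKUKV : Disjoint KU KV := by
    rw [Set.disjoint_left]
    rintro x ⟨hxZ, hxU⟩ ⟨-, hxV⟩
    have hS := hSlampos x hxZ
    have hη := etak_pos k
    nlinarith
  have hAKU : A ∩ Z ⊆ KU := by
    rintro x hx
    refine ⟨hx.2, ?_⟩
    rw [hnumA x hx]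
    have h1 := tlev_add_etak_le_one k
    have h2 := hSlamnn x
    nlinarith
  have hBKV : B ∩ Z ⊆ KV := by
    rintro x hx
    refine ⟨hx.2, ?_⟩
    rw [hnumB x hx]
    have h1 := etak_lt_tlev k
    have h2 := hSlamnn x
    have h3 := tlev_pos k
    nlinarith
  -- thickened separators
  obtain ⟨rW, hrW, hWdisj⟩ := hKUKV.exists_thickenings hKUcl.isCompact hKVcl
  set U₀ : Set X := thickening (rW/2) KU with hU₀def
  set V₀ : Set X := thickening (rW/2) KV with hV₀def
  have hU₀o : IsOpen U₀ := isOpen_thickening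
  have hV₀o : IsOpen V₀ := isOpen_thickening
  have hclU₀ : closure U₀ ⊆ thickening rW KU :=
    (closure_thickening_subset_cthickening _ _).trans
      (cthickening_subset_thickening' hrW (half_lt_self hrW) _)
  have hclV₀ : closure V₀ ⊆ thickening rW KV :=
    (closure_thickening_subset_cthickening _ _).trans
      (cthickening_subset_thickening' hrW (half_lt_self hrW) _)
  have hclU₀V₀ : Disjoint (closure U₀) (closure V₀) := hWdisj.mono hclU₀ hclV₀
  have hKUU₀ : KU ⊆ U₀ := self_subset_thickening (half_pos hrW) _
  have hKVV₀ : KV ⊆ V₀ := self_subset_thickening (half_pos hrW) _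
  -- the wall
  set Wbar : Set X := {x | x ∈ Z ∧ |num x - tlev k * Slam x| ≤ etak k * Slam x}
    with hWbardef
  have hcontabs : Continuous (fun x => |num x - tlev k * Slam x|) :=
    (hnumcont.sub (continuous_const.mul hSlamcont)).abs
  have hWbarcl : IsClosed Wbar := by
    have : Wbar = Z ∩ {x | |num x - tlev k * Slam x| ≤ etak k * Slam x} := rfl
    rw [this]
    exact hZcl.inter (isClosed_le hcontabs (continuous_const.mul hSlamcont))
  have hwall0 : Z \ (U₀ ∪ V₀) ⊆ Wbar := by
    rintro x ⟨hxZ, hxn⟩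
    have hxU : ¬ ((tlev k + etak k) * Slam x ≤ num x) := by
      intro hc
      exact hxn (Or.inl (hKUU₀ ⟨hxZ, hc⟩))
    have hxV : ¬ (num x ≤ (tlev k - etak k) * Slam x) := by
      intro hc
      exact hxn (Or.inr (hKVV₀ ⟨hxZ, hc⟩))
    push_neg at hxU hxV
    refine ⟨hxZ, ?_⟩
    rw [abs_le]
    constructor <;> nlinarith
  -- star cover of the wall
  set Oc : ws → Set X := fun i =>
    {x | thetak k * Slam x < lam i x} ∩
      {x | |num x - tlev k * Slam x| < 2 * etak k * Slam x} with hOcdef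
  have hOco : ∀ i, IsOpen (Oc i) := by
    intro i
    exact (isOpen_lt (continuous_const.mul hSlamcont) (hlamcont i)).inter
      (isOpen_lt hcontabs (by
        have : Continuous (fun x => 2 * etak k * Slam x) := continuous_const.mul hSlamcont
        exact this))
  have hWbarOc : Wbar ⊆ ⋃ i, Oc i := by
    rintro x ⟨hxZ, hxw⟩
    have hS := hSlampos x hxZ
    have hη := etak_pos k
    have h2 : |num x - tlev k * Slam x| < 2 * etak k * Slam x := by nlinarith
    by_contra hcon
    rw [mem_iUnion] at hcon
    push_neg at hcon
    have hle : ∀ i, lam i x ≤ thetak k * Slam x := by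
      intro i
      by_contra hgt
      push_neg at hgt
      exact hcon i ⟨hgt, h2⟩
    set P : Finset ws := Finset.univ.filter (fun i => 0 < lam i x) with hPdef
    have hPcard : P.card ≤ k + 1 := by
      have hsub : (↑P : Set ws) ⊆ {i : ws | x ∈ Tt i} := by
        intro i hi
        exact (hlam_pos_iff i x hxZ).1 (Finset.mem_filter.1 hi).2
      calc P.card = (↑P : Set ws).ncard := (Set.ncard_coe_finset P).symm
        _ ≤ ({i : ws | x ∈ Tt i}).ncard := Set.ncard_le_ncard hsub (Set.toFinite _)
        _ ≤ k + 1 := hTord x hxZ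
    have hsum' : Slam x = ∑ i ∈ P, lam i x := by
      refine (Finset.sum_subset (Finset.subset_univ P) ?_).symm
      intro i _ hni
      have h1 := hlamnn i x
      have h2 : ¬ 0 < lam i x := fun hp =>
        hni (Finset.mem_filter.2 ⟨Finset.mem_univ _, hp⟩)
      linarith
    have hub : Slam x ≤ (P.card : ℝ) * (thetak k * Slam x) := by
      calc Slam x = ∑ i ∈ P, lam i x := hsum'
        _ ≤ ∑ _i ∈ P, thetak k * Slam x :=
            Finset.sum_le_sum (fun i _ => hle i)
        _ = (P.card : ℝ) * (thetak k * Slam x) := by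
            rw [Finset.sum_const, nsmul_eq_mul]
    have hθS : ((k:ℝ)+1) * thetak k < 1 := K1_mul_thetak_lt_one k
    have hPle : (P.card : ℝ) ≤ (k:ℝ)+1 := by exact_mod_cast hPcard
    have hθpos := thetak_pos k
    nlinarith [mul_le_mul_of_nonneg_right hPle (le_of_lt (mul_pos hθpos hS)),
      mul_lt_mul_of_pos_right hθS hS]
  -- Lebesgue number shrinking of the star cover
  obtain ⟨ℓ, hℓ, hleb⟩ := lebesgue_number_lemma_of_metric hWbarcl.isCompact hOco hWbarOc
  set Sc : ws → Set X := fun i => {x | x ∈ Wbar ∧ ∀ w, w ∉ Oc i → ℓ ≤ dist x w}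
    with hScdef
  have hSccl : ∀ i, IsClosed (Sc i) := by
    intro i
    have he : Sc i = Wbar ∩ ⋂ w ∈ (Oc i)ᶜ, {x | ℓ ≤ dist x w} := by
      ext x
      simp only [hScdef, mem_setOf_eq, mem_inter_iff, mem_iInter, mem_compl_iff]
    rw [he]
    exact hWbarcl.inter (isClosed_biInter (fun w _ =>
      isClosed_le continuous_const (continuous_id.dist continuous_const)))
  have hScOc : ∀ i, Sc i ⊆ Oc i := by
    rintro i x ⟨hxW, hxd⟩
    by_contra hxn
    have := hxd x hxn
    simp [dist_self] at this
    linarith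
  have hWbarSc : Wbar ⊆ ⋃ i, Sc i := by
    intro x hxW
    obtain ⟨i, hball⟩ := hleb x hxW
    refine mem_iUnion.2 ⟨i, hxW, ?_⟩
    intro w hw
    by_contra hlt
    push_neg at hlt
    exact hw (hball (by rwa [mem_ball, dist_comm]))
  have hScT : ∀ i, Sc i ⊆ Tt i := by
    intro i x hx
    have hxO := hScOc i hx
    have hxZ : x ∈ Z := hx.1.1
    have hS := hSlampos x hxZ
    have hθ := thetak_pos k
    have hpos : 0 < lam i x := lt_of_le_of_lt (by positivity) hxO.1
    exact (hlam_pos_iff i x hxZ).1 hpos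
  have hScsmall : ∀ i, ∀ a ∈ Sc i, ∀ b ∈ Sc i, dist a b ≤ δ₀ :=
    fun i a ha b hb => hTsmall i a (hScT i ha) b (hScT i hb)
  -- (k+1)-fold intersections of the Sc are empty
  have hScEmpty : ∀ T' : Finset ws, T'.card = k + 1 → ⋂ i ∈ T', Sc i = ∅ := by
    intro T' hT'
    rw [eq_empty_iff_forall_notMem]
    intro x hx
    simp only [mem_iInter] at hx
    have hT'ne : T'.Nonempty := Finset.card_pos.1 (by omega)
    obtain ⟨i₀, hi₀⟩ := hT'ne
    have hxW : x ∈ Wbar := (hx i₀ hi₀).1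
    obtain ⟨hxZ, hxw⟩ := hxW
    have hS := hSlampos x hxZ
    set ψ : ws → ℝ := fun i => lam i x / Slam x with hψdef
    have hkey := grid_estimate k ψ
      (fun i => div_nonneg (hlamnn i x) (le_of_lt hS))
      (by rw [← Finset.sum_div]; exact div_self (ne_of_gt hS))
      IA IB hIAB T' hT'
      (by
        intro i hi
        have hxO := hScOc i (hx i hi)
        have h1 : thetak k * Slam x < lam i x := hxO.1
        exact (lt_div_iff₀ hS).2 h1)
    have hrep : (∑ i ∈ IA, ψ i) - (∑ i ∈ IB, ψ i) - tlev k
        = (num x - tlev k * Slam x) / Slam x := by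
      simp only [hψdef, ← Finset.sum_div, hnumdef]
      field_simp
    rw [hrep, abs_div, abs_of_pos hS] at hkey
    have hxO₀ := hScOc i₀ (hx i₀ hi₀)
    have hlt : |num x - tlev k * Slam x| < 2 * etak k * Slam x := hxO₀.2
    rw [le_div_iff₀ hS] at hkey
    nlinarith
  -- a uniform thickening radius
  have hkey2 : ∀ T' : Finset ws, ∃ r, 0 < r ∧
      (T'.card = k + 1 → ⋂ i ∈ T', thickening r (Sc i) = ∅) := by
    intro T'
    by_cases h : T'.card = k + 1
    · obtain ⟨r, hr, he⟩ := exists_thickening_iInter_empty Sc T' hSccl (hScEmpty T' h)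
      exact ⟨r, hr, fun _ => he⟩
    · exact ⟨1, one_pos, fun hc => absurd hc h⟩
  choose ρ hρpos hρprop using hkey2
  obtain ⟨r₁, hr₁, hr₁le⟩ := exists_pos_forall_le Finset.univ ρ (fun T' _ => hρpos T')
  have hiEmpty : ∀ T' : Finset ws, T'.card = k + 1 →
      ⋂ i ∈ T', thickening r₁ (Sc i) = ∅ := by
    intro T' hT'
    rw [← subset_empty_iff, ← hρprop T' hT']
    exact iInter₂_mono (fun i _ => thickening_mono (hr₁le T' (Finset.mem_univ _)) _)
  -- the wall cover
  set r₂ : ℝ := min r₁ (ε/8) with hr₂def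
  have hr₂pos : 0 < r₂ := lt_min hr₁ (by linarith)
  have hr₂ε : r₂ ≤ ε/8 := min_le_right _ _
  have hr₂r₁ : r₂ ≤ r₁ := min_le_left _ _
  set ES : ws → Set X := fun i => thickening r₂ (Sc i) \ (A ∪ B) with hESdef
  set cfam : Set (Set X) := Set.range ES with hcfamdef
  have hord : Paper.OrderLE cfam k := by
    apply orderLE_range
    intro x
    by_contra hc
    push_neg at hc
    set s : Set ws := {i | x ∈ ES i} with hsdef
    have hfin : s.Finite := Set.toFinite s
    have hcard : k + 1 ≤ hfin.toFinset.card := by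
      have he : s.ncard = hfin.toFinset.card := Set.ncard_eq_toFinset_card s hfin
      omega
    obtain ⟨T', hT'sub, hT'card⟩ := Finset.exists_subset_card_eq hcard
    have hmem : x ∈ ⋂ i ∈ T', thickening r₁ (Sc i) := by
      simp only [mem_iInter]
      intro i hi
      have hxi : x ∈ ES i := by
        have := hT'sub hi
        rw [Set.Finite.mem_toFinset] at this
        exact this
      exact thickening_mono hr₂r₁ _ hxi.1
    rw [hiEmpty T' hT'card] at hmem
    exact hmem
  have hdiam : ∀ u ∈ cfam, Metric.diam u ≤ ε := by
    rintro u ⟨i, rfl⟩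
    apply diam_le_of_forall_dist_le (le_of_lt hε)
    intro a ha b hb
    obtain ⟨a', ha'S, hda⟩ := mem_thickening_iff.1 ha.1
    obtain ⟨b', hb'S, hdb⟩ := mem_thickening_iff.1 hb.1
    have h1 : dist a' b' ≤ δ₀ := hScsmall i a' ha'S b' hb'S
    calc dist a b ≤ dist a a' + dist a' b' + dist b' b := dist_triangle4 a a' b' b
      _ ≤ r₂ + δ₀ + r₂ := by
          rw [dist_comm b' b]
          exact add_le_add (add_le_add (le_of_lt hda) h1) (le_of_lt hdb)
      _ ≤ ε/8 + ε/4 + ε/8 := by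
          exact add_le_add (add_le_add hr₂ε hδ₀ε) hr₂ε
      _ ≤ ε := by linarith
  have hopen : ∀ u ∈ cfam, IsOpen u := by
    rintro u ⟨i, rfl⟩
    exact isOpen_thickening.sdiff (hA.union hB)
  -- the final separators
  set U₁ : Set X := U₀ \ B with hU₁def
  set V₁ : Set X := V₀ \ A with hV₁def
  have hU₁o : IsOpen U₁ := hU₀o.sdiff hB
  have hV₁o : IsOpen V₁ := hV₀o.sdiff hA
  have hclU₁V₁ : Disjoint (closure U₁) (closure V₁) :=
    hclU₀V₀.mono (closure_mono diff_subset) (closure_mono diff_subset)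
  set G : Set X := (U₁ ∪ V₁) ∪ ⋃ i, ES i with hGdef
  have hGopen : IsOpen G :=
    ((hU₁o.union hV₁o).union (isOpen_iUnion (fun i => isOpen_thickening.sdiff (hA.union hB))))
  have hZG : Z ⊆ G := by
    intro x hxZ
    by_cases hxA : x ∈ A
    · have hxB : x ∉ B := Set.disjoint_left.1 hAB hxA
      exact Or.inl (Or.inl ⟨hKUU₀ (hAKU ⟨hxA, hxZ⟩), hxB⟩)
    · by_cases hxB : x ∈ B
      · exact Or.inl (Or.inr ⟨hKVV₀ (hBKV ⟨hxB, hxZ⟩), hxA⟩)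
      · by_cases hxU : x ∈ U₀
        · exact Or.inl (Or.inl ⟨hxU, hxB⟩)
        · by_cases hxV : x ∈ V₀
          · exact Or.inl (Or.inr ⟨hxV, hxA⟩)
          · have hxW : x ∈ Wbar := hwall0 ⟨hxZ, fun hc => hc.elim hxU hxV⟩
            obtain ⟨i, hxi⟩ := mem_iUnion.1 (hWbarSc hxW)
            refine Or.inr (mem_iUnion.2 ⟨i, ?_⟩)
            exact ⟨self_subset_thickening hr₂pos _ hxi, fun hc => hc.elim hxA hxB⟩
  -- choice of the radius
  have hδex : ∃ δ : ℝ, 0 < δ ∧ δ ≤ ε/4 ∧ f ⁻¹' (Metric.closedBall y δ) ⊆ G := by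
    by_cases hne : (f '' Gᶜ).Nonempty
    · have hCcl : IsCompact Gᶜ := hGopen.isClosed_compl.isCompact
      have himgcomp : IsCompact (f '' Gᶜ) := hCcl.image hf
      have hynot : y ∉ f '' Gᶜ := by
        rintro ⟨x, hxC, hfx⟩
        refine hxC (hZG ?_)
        simp only [hZdef, mem_preimage, mem_singleton_iff, hfx]
      have hpos : 0 < infDist y (f '' Gᶜ) :=
        (himgcomp.isClosed.notMem_iff_infDist_pos hne).1 hynot
      refine ⟨min (infDist y (f '' Gᶜ) / 2) (ε/8), by positivity,
        le_trans (min_le_right _ _) (by linarith), ?_⟩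
      intro x hx
      by_contra hxG
      have hximg : f x ∈ f '' Gᶜ := ⟨x, hxG, rfl⟩
      have h1 : infDist y (f '' Gᶜ) ≤ dist y (f x) := infDist_le_dist_of_mem hximg
      have h2 : dist (f x) y ≤ min (infDist y (f '' Gᶜ) / 2) (ε/8) := hx
      rw [dist_comm] at h2
      have h3 := min_le_left (infDist y (f '' Gᶜ) / 2) (ε/8)
      linarith
    · refine ⟨ε/8, by positivity, by linarith, ?_⟩
      intro x _
      by_contra hxG
      exact hne ⟨f x, ⟨x, hxG, rfl⟩⟩
  obtain ⟨δ, hδpos, hδε, hδG⟩ := hδex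
  refine ⟨δ, U₁, V₁, cfam, hδpos, hδε, hU₁o, hV₁o, hclU₁V₁, hopen, hdiam, hord, ?_, ?_, ?_⟩
  · rintro x ⟨hxA, hxK⟩
    have hxB : x ∉ B := Set.disjoint_left.1 hAB hxA
    rcases hδG hxK with (hx | hx) | hx
    · exact hx
    · exact absurd hxA hx.2
    · obtain ⟨i, hxi⟩ := mem_iUnion.1 hx
      exact absurd (Or.inl hxA) hxi.2
  · rintro x ⟨hxB, hxK⟩
    have hxA : x ∉ A := Set.disjoint_right.1 hAB hxB
    rcases hδG hxK with (hx | hx) | hx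
    · exact absurd hxB hx.2
    · exact hx
    · obtain ⟨i, hxi⟩ := mem_iUnion.1 hx
      exact absurd (Or.inr hxB) hxi.2
  · rintro x ⟨hxK, hxn⟩
    rcases hδG hxK with (hx | hx) | hx
    · exact absurd (Or.inl hx) hxn
    · exact absurd (Or.inr hx) hxn
    · obtain ⟨i, hxi⟩ := mem_iUnion.1 hx
      exact ⟨ES i, ⟨i, rfl⟩, hxi⟩
end Package
/-- Lemma 3. -/
theorem stmt5 {X Y : Type*} [MetricSpace X] [CompactSpace X] [MetricSpace Y] [CompactSpace Y]
    (f : X → Y) (hf : Continuous f) (k : ℕ)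
    (hdim : ∀ y : Y, Paper.DimLE (f ⁻¹' {y}) (k : ℤ))
    (hCX : Paper.CSpace X) (hCY : Paper.CSpace Y)
    (ε : ℝ) (hε : 0 < ε)
    (U V : Set X) (hU : IsOpen U) (hV : IsOpen V)
    (hUV : Disjoint (closure U) (closure V))
    (F : Set Y) (hF : IsClosed F) :
    ∃ (U' V' : ℕ → Set X) (F' : ℕ → Set Y),
      (∀ p, IsClosed (F' p) ∧ IsOpen (U' p) ∧ IsOpen (V' p) ∧
        Disjoint (closure (U' p)) (closure (V' p))) ∧
      (∀ p, U ∩ f ⁻¹' F' p ⊆ U' p ∧ V ∩ f ⁻¹' F' p ⊆ V' p) ∧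
      (F ⊆ ⋃ p : ℕ, F' p) ∧ (∀ p, Metric.diam (F' p) < ε) ∧
      (∀ p, Paper.AdmitsSmallCover (f ⁻¹' F' p \ (U' p ∪ V' p)) k ε) ∧
      Paper.DiscreteFamily (fun p : ℕ => f ⁻¹' F' p \ (U' p ∪ V' p)) := by
  classical
  -- a Urysohn function separating the closures of U and V
  obtain ⟨g, hg0, hg1, hg01⟩ :=
    exists_continuous_zero_one_of_isClosed isClosed_closure isClosed_closure hUV
  set φ : X → ℝ := fun x => 1 - 2 * g x with hφdef
  have hφcont : Continuous φ := continuous_const.sub (continuous_const.mul g.continuous)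
  have hφU : ∀ x ∈ closure U, φ x = 1 := by
    intro x hx
    have : g x = 0 := hg0 hx
    simp [hφdef, this]
  have hφV : ∀ x ∈ closure V, φ x = -1 := by
    intro x hx
    have : g x = 1 := hg1 hx
    simp only [hφdef]
    rw [this]
    norm_num
  -- disjoint bands in the range of φ
  set sb : ℕ → ℝ := fun n => (1/2 : ℝ)^(n+2) with hsbdef
  set ηb : ℕ → ℝ := fun n => (1/2 : ℝ)^(n+3) with hηbdef
  have hsbpos : ∀ n, 0 < sb n := fun n => by positivity
  have hηbpos : ∀ n, 0 < ηb n := fun n => by positivity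
  have hsum_le_one : ∀ n, sb n + ηb n ≤ 1 := by
    intro n
    have h1 : (1/2 : ℝ)^(n+2) ≤ (1/2 : ℝ)^2 :=
      pow_le_pow_of_le_one (by norm_num) (by norm_num) (by omega)
    have h2 : (1/2 : ℝ)^(n+3) ≤ (1/2 : ℝ)^3 :=
      pow_le_pow_of_le_one (by norm_num) (by norm_num) (by omega)
    simp only [hsbdef, hηbdef]
    norm_num at h1 h2 ⊢
    linarith
  have hband : ∀ n m, n < m → sb m + ηb m ≤ sb n := by
    intro n m hnm
    have h1 : (1/2 : ℝ)^(m+2) ≤ (1/2 : ℝ)^(n+3) :=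
      pow_le_pow_of_le_one (by norm_num) (by norm_num) (by omega)
    have h2 : (1/2 : ℝ)^(m+3) ≤ (1/2 : ℝ)^(n+4) :=
      pow_le_pow_of_le_one (by norm_num) (by norm_num) (by omega)
    have e1 : (1/2 : ℝ)^(n+3) = (1/2 : ℝ)^(n+2) * (1/2) := by rw [pow_succ]
    have e2 : (1/2 : ℝ)^(n+4) = (1/2 : ℝ)^(n+2) * (1/4) := by
      rw [show n+4 = (n+2)+2 by omega, pow_add]
      norm_num
    have hp : (0:ℝ) < (1/2 : ℝ)^(n+2) := by positivity
    simp only [hsbdef, hηbdef]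
    nlinarith
  -- the closed pairs
  set An : ℕ → Set X := fun n => {x | sb n + ηb n ≤ φ x} with hAndef
  set Bn : ℕ → Set X := fun n => {x | φ x ≤ sb n} with hBndef
  have hAncl : ∀ n, IsClosed (An n) := fun n => isClosed_le continuous_const hφcont
  have hBncl : ∀ n, IsClosed (Bn n) := fun n => isClosed_le hφcont continuous_const
  have hABdisj : ∀ n, Disjoint (An n) (Bn n) := by
    intro n
    rw [Set.disjoint_left]
    intro x hxA hxB
    have h1 : sb n + ηb n ≤ φ x := hxA
    have h2 : φ x ≤ sb n := hxB
    have := hηbpos n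
    linarith
  have hUAn : ∀ n, closure U ⊆ An n := by
    intro n x hx
    have h := hφU x hx
    show sb n + ηb n ≤ φ x
    rw [h]
    exact hsum_le_one n
  have hVBn : ∀ n, closure V ⊆ Bn n := by
    intro n x hx
    have h := hφV x hx
    show φ x ≤ sb n
    rw [h]
    linarith [hsbpos n]
  -- local packages
  have hpkg : ∀ (n : ℕ) (y : Y), ∃ (δ : ℝ) (U' V' : Set X) (c : Set (Set X)),
      0 < δ ∧ δ ≤ ε/4 ∧
      IsOpen U' ∧ IsOpen V' ∧ Disjoint (closure U') (closure V') ∧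
      (∀ u ∈ c, IsOpen u) ∧ (∀ u ∈ c, Metric.diam u ≤ ε) ∧ Paper.OrderLE c k ∧
      An n ∩ f ⁻¹' (Metric.closedBall y δ) ⊆ U' ∧
      Bn n ∩ f ⁻¹' (Metric.closedBall y δ) ⊆ V' ∧
      f ⁻¹' (Metric.closedBall y δ) \ (U' ∪ V') ⊆ ⋃₀ c :=
    fun n y => package f hf k y (hdim y) (An n) (Bn n) (hAncl n) (hBncl n)
      (hABdisj n) ε hε
  choose δP UP VP cP hδpos hδε hUPo hVPo hUVP hcPo hcPd hcPord hAin hBin hwall using hpkg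
  -- apply property C of Y
  set α : ℕ → Set (Set Y) := fun n => {O | ∃ y, O = Metric.ball y (δP n y / 2)} with hαdef
  obtain ⟨μ, hμ, hμcov⟩ := hCY α (by
    intro n
    constructor
    · rintro O ⟨y, rfl⟩
      exact Metric.isOpen_ball
    · apply Set.eq_univ_of_forall
      intro y
      exact ⟨Metric.ball y (δP n y / 2), ⟨y, rfl⟩,
        Metric.mem_ball_self (by linarith [hδpos n y])⟩)
  -- finite subcover
  set 𝒮 : Set (Set Y) := ⋃ n, μ n with h𝒮def
  have h𝒮o : ∀ O : 𝒮, IsOpen (O : Set Y) := by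
    rintro ⟨O, hO⟩
    obtain ⟨n, hn⟩ := mem_iUnion.1 hO
    exact (hμ n).1 O hn
  obtain ⟨t, ht⟩ := isCompact_univ.elim_finite_subcover (fun O : 𝒮 => (O : Set Y))
    h𝒮o (by rw [← sUnion_eq_iUnion, hμcov])
  have hlev : ∀ O : 𝒮, ∃ n, (O : Set Y) ∈ μ n := fun O => mem_iUnion.1 O.2
  choose nO hnO using hlev
  have href : ∀ O : 𝒮, ∃ y, (O : Set Y) ⊆ Metric.ball y (δP (nO O) y / 2) := by
    intro O
    obtain ⟨v, hv, hOv⟩ := (hμ (nO O)).2.2 _ (hnO O)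
    obtain ⟨y, rfl⟩ := hv
    exact ⟨y, hOv⟩
  choose yO hyO using href
  -- shrink the finite cover
  set u : 𝒮 → Set Y := fun O => if O ∈ t then (O : Set Y) else ∅ with hudef
  have huo : ∀ O, IsOpen (u O) := by
    intro O
    by_cases h : O ∈ t
    · simp only [hudef, if_pos h]
      exact h𝒮o O
    · simp only [hudef, if_neg h]
      exact isOpen_empty
  have hucov : (univ : Set Y) ⊆ ⋃ O, u O := by
    intro x hx
    have := ht hx
    simp only [mem_iUnion] at this
    obtain ⟨O, hOt, hxO⟩ := this
    exact mem_iUnion.2 ⟨O, by simp only [hudef, if_pos hOt]; exact hxO⟩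
  have hptfin : ∀ x ∈ (univ : Set Y), {O : 𝒮 | x ∈ u O}.Finite := by
    intro x _
    apply t.finite_toSet.subset
    intro O hO
    simp only [mem_setOf_eq, hudef] at hO
    by_cases h : O ∈ t
    · exact Finset.mem_coe.2 h
    · rw [if_neg h] at hO
      exact absurd hO (notMem_empty x)
  obtain ⟨v, hvcov, hvo, hvcl⟩ :=
    exists_subset_iUnion_closure_subset isClosed_univ huo hptfin hucov
  set C : 𝒮 → Set Y := fun O => closure (v O) with hCdef
  have hCu : ∀ O, C O ⊆ u O := hvcl
  -- enumeration of the pieces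
  set L : List 𝒮 := t.toList with hLdef
  set N : ℕ := L.length with hNdef
  have hLnodup : L.Nodup := t.nodup_toList
  have hLmem : ∀ (p : ℕ) (h : p < N), L.get ⟨p, h⟩ ∈ t := by
    intro p h
    rw [← Finset.mem_toList]
    exact L.get_mem _
  set F' : ℕ → Set Y := fun p => if h : p < N then C (L.get ⟨p, h⟩) else ∅ with hF'def
  set U'f : ℕ → Set X := fun p =>
    if h : p < N then UP (nO (L.get ⟨p, h⟩)) (yO (L.get ⟨p, h⟩)) else ∅ with hU'def
  set V'f : ℕ → Set X := fun p =>
    if h : p < N then VP (nO (L.get ⟨p, h⟩)) (yO (L.get ⟨p, h⟩)) else ∅ with hV'def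
  -- basic containments
  have hFsub : ∀ (p : ℕ) (h : p < N), F' p ⊆
      Metric.ball (yO (L.get ⟨p, h⟩)) (δP (nO (L.get ⟨p, h⟩)) (yO (L.get ⟨p, h⟩)) / 2) := by
    intro p h
    have h1 : F' p = C (L.get ⟨p, h⟩) := by simp only [hF'def, dif_pos h]
    rw [h1]
    refine (hCu _).trans ?_
    have h2 : u (L.get ⟨p, h⟩) = (L.get ⟨p, h⟩ : Set Y) := by
      simp only [hudef, if_pos (hLmem p h)]
    rw [h2]
    exact hyO _
  have hKsub : ∀ (p : ℕ) (h : p < N), f ⁻¹' (F' p) ⊆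
      f ⁻¹' (Metric.closedBall (yO (L.get ⟨p, h⟩))
        (δP (nO (L.get ⟨p, h⟩)) (yO (L.get ⟨p, h⟩)))) := by
    intro p h
    apply preimage_mono
    refine (hFsub p h).trans ?_
    refine Metric.ball_subset_closedBall.trans (Metric.closedBall_subset_closedBall ?_)
    linarith [hδpos (nO (L.get ⟨p, h⟩)) (yO (L.get ⟨p, h⟩))]
  -- rewriting helpers
  have hF'eq : ∀ (p : ℕ) (h : p < N), F' p = C (L.get ⟨p, h⟩) := by
    intro p h; simp only [hF'def, dif_pos h]
  have hU'eq : ∀ (p : ℕ) (h : p < N),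
      U'f p = UP (nO (L.get ⟨p, h⟩)) (yO (L.get ⟨p, h⟩)) := by
    intro p h; simp only [hU'def, dif_pos h]
  have hV'eq : ∀ (p : ℕ) (h : p < N),
      V'f p = VP (nO (L.get ⟨p, h⟩)) (yO (L.get ⟨p, h⟩)) := by
    intro p h; simp only [hV'def, dif_pos h]
  have hF'emp : ∀ (p : ℕ), ¬ p < N → F' p = ∅ := by
    intro p h; simp only [hF'def, dif_neg h]
  have hU'emp : ∀ (p : ℕ), ¬ p < N → U'f p = ∅ := by
    intro p h; simp only [hU'def, dif_neg h]
  have hV'emp : ∀ (p : ℕ), ¬ p < N → V'f p = ∅ := by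
    intro p h; simp only [hV'def, dif_neg h]
  have hF'O : ∀ (p : ℕ) (h : p < N), F' p ⊆ (L.get ⟨p, h⟩ : Set Y) := by
    intro p h
    rw [hF'eq p h]
    refine (hCu _).trans ?_
    rw [show u (L.get ⟨p, h⟩) = (L.get ⟨p, h⟩ : Set Y) by
      simp only [hudef, if_pos (hLmem p h)]]
  have hF'cl : ∀ p, IsClosed (F' p) := by
    intro p
    by_cases h : p < N
    · rw [hF'eq p h]; exact isClosed_closure
    · rw [hF'emp p h]; exact isClosed_empty
  have hU'o : ∀ p, IsOpen (U'f p) := by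
    intro p
    by_cases h : p < N
    · rw [hU'eq p h]; exact hUPo _ _
    · rw [hU'emp p h]; exact isOpen_empty
  have hV'o : ∀ p, IsOpen (V'f p) := by
    intro p
    by_cases h : p < N
    · rw [hV'eq p h]; exact hVPo _ _
    · rw [hV'emp p h]; exact isOpen_empty
  -- the walls
  set E : ℕ → Set X := fun p => f ⁻¹' (F' p) \ (U'f p ∪ V'f p) with hEdef
  have hEcl : ∀ p, IsClosed (E p) := by
    intro p
    simp only [hEdef, diff_eq]
    exact ((hF'cl p).preimage hf).inter ((hU'o p).union (hV'o p)).isClosed_compl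
  have hEemp : ∀ p, ¬ p < N → E p = ∅ := by
    intro p h
    rw [hEdef]
    simp [hF'emp p h]
  have hEband : ∀ (p : ℕ) (h : p < N), ∀ x ∈ E p,
      sb (nO (L.get ⟨p, h⟩)) < φ x ∧
        φ x < sb (nO (L.get ⟨p, h⟩)) + ηb (nO (L.get ⟨p, h⟩)) := by
    intro p h x hx
    obtain ⟨hx1, hx2⟩ := hx
    have hxK : x ∈ f ⁻¹' (Metric.closedBall (yO (L.get ⟨p, h⟩))
        (δP (nO (L.get ⟨p, h⟩)) (yO (L.get ⟨p, h⟩)))) := hKsub p h hx1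
    constructor
    · by_contra hc
      push_neg at hc
      have : x ∈ Bn (nO (L.get ⟨p, h⟩)) := hc
      have : x ∈ VP (nO (L.get ⟨p, h⟩)) (yO (L.get ⟨p, h⟩)) :=
        hBin _ _ ⟨this, hxK⟩
      exact hx2 (Or.inr (by rwa [hV'eq p h]))
    · by_contra hc
      push_neg at hc
      have : x ∈ An (nO (L.get ⟨p, h⟩)) := hc
      have : x ∈ UP (nO (L.get ⟨p, h⟩)) (yO (L.get ⟨p, h⟩)) :=
        hAin _ _ ⟨this, hxK⟩
      exact hx2 (Or.inl (by rwa [hU'eq p h]))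
  have hEdisj : ∀ p q, p ≠ q → ∀ x, x ∈ E p → x ∈ E q → False := by
    intro p q hpq x hxp hxq
    by_cases hp : p < N
    · by_cases hq : q < N
      · set i := L.get ⟨p, hp⟩ with hidef
        set j := L.get ⟨q, hq⟩ with hjdef
        have hij : i ≠ j := by
          intro hc
          have := (hLnodup.get_inj_iff).1 hc
          rw [Fin.mk.injEq] at this
          exact hpq this
        rcases lt_trichotomy (nO i) (nO j) with hlt | heq | hgt
        · have h1 := (hEband p hp x hxp).1
          have h2 := (hEband q hq x hxq).2
          have h3 := hband (nO i) (nO j) hlt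
          linarith
        · have hji : (i : Set Y) ≠ (j : Set Y) := Subtype.coe_injective.ne hij
          have hdj : Disjoint (i : Set Y) (j : Set Y) := by
            have h1 := hnO i
            have h2 := hnO j
            rw [← heq] at h2
            exact (hμ (nO i)).2.1 h1 h2 hji
          have hfx1 : f x ∈ (i : Set Y) := hF'O p hp hxp.1
          have hfx2 : f x ∈ (j : Set Y) := hF'O q hq hxq.1
          exact hdj.le_bot ⟨hfx1, hfx2⟩
        · have h1 := (hEband q hq x hxq).1
          have h2 := (hEband p hp x hxp).2
          have h3 := hband (nO j) (nO i) hgt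
          linarith
      · rw [hEemp q hq] at hxq
        exact hxq
    · rw [hEemp p hp] at hxp
      exact hxp
  have hord0 : Paper.OrderLE (∅ : Set (Set X)) k := by
    intro x
    have he : {u ∈ (∅ : Set (Set X)) | x ∈ u} = ∅ := by ext u; simp
    rw [he]
    exact ⟨finite_empty, by simp⟩
  -- conclusion
  refine ⟨U'f, V'f, F', ?_, ?_, ?_, ?_, ?_, ?_⟩
  · intro p
    refine ⟨hF'cl p, hU'o p, hV'o p, ?_⟩
    by_cases h : p < N
    · rw [hU'eq p h, hV'eq p h]
      exact hUVP _ _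
    · rw [hU'emp p h, hV'emp p h]
      simp
  · intro p
    by_cases h : p < N
    · constructor
      · rintro x ⟨hxU, hxF⟩
        have h1 : x ∈ An (nO (L.get ⟨p, h⟩)) := hUAn _ (subset_closure hxU)
        have h2 := hKsub p h hxF
        rw [hU'eq p h]
        exact hAin _ _ ⟨h1, h2⟩
      · rintro x ⟨hxV, hxF⟩
        have h1 : x ∈ Bn (nO (L.get ⟨p, h⟩)) := hVBn _ (subset_closure hxV)
        have h2 := hKsub p h hxF
        rw [hV'eq p h]
        exact hBin _ _ ⟨h1, h2⟩
    · rw [hF'emp p h]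
      simp
  · intro x _
    have hx : x ∈ ⋃ O, v O := hvcov (mem_univ x)
    obtain ⟨O, hxO⟩ := mem_iUnion.1 hx
    have hOt : O ∈ t := by
      by_contra hOt
      have h1 : v O ⊆ u O := subset_closure.trans (hCu O)
      have h2 : u O = ∅ := by simp only [hudef, if_neg hOt]
      rw [h2] at h1
      exact notMem_empty x (h1 hxO)
    obtain ⟨⟨p, hp⟩, hget⟩ := List.mem_iff_get.1 (Finset.mem_toList.2 hOt)
    refine mem_iUnion.2 ⟨p, ?_⟩
    rw [hF'eq p hp]
    have : C (L.get ⟨p, hp⟩) = C O := by rw [hget]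
    rw [this]
    exact subset_closure hxO
  · intro p
    by_cases h : p < N
    · have h1 : Metric.diam (F' p) ≤ Metric.diam (Metric.ball (yO (L.get ⟨p, h⟩))
          (δP (nO (L.get ⟨p, h⟩)) (yO (L.get ⟨p, h⟩)) / 2)) :=
        Metric.diam_mono (hFsub p h) Metric.isBounded_ball
      have hδ := hδpos (nO (L.get ⟨p, h⟩)) (yO (L.get ⟨p, h⟩))
      have hδ' := hδε (nO (L.get ⟨p, h⟩)) (yO (L.get ⟨p, h⟩))
      have h2 : Metric.diam (Metric.ball (yO (L.get ⟨p, h⟩))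
          (δP (nO (L.get ⟨p, h⟩)) (yO (L.get ⟨p, h⟩)) / 2)) ≤
          2 * (δP (nO (L.get ⟨p, h⟩)) (yO (L.get ⟨p, h⟩)) / 2) :=
        Metric.diam_ball (by linarith)
      calc Metric.diam (F' p) ≤ _ := h1
        _ ≤ _ := h2
        _ < ε := by linarith
    · rw [hF'emp p h]
      rw [Metric.diam_empty]
      exact hε
  · intro p
    by_cases h : p < N
    · refine ⟨cP (nO (L.get ⟨p, h⟩)) (yO (L.get ⟨p, h⟩)), hcPo _ _, ?_, hcPd _ _,
        hcPord _ _⟩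
      rintro x ⟨hx1, hx2⟩
      apply hwall (nO (L.get ⟨p, h⟩)) (yO (L.get ⟨p, h⟩))
      refine ⟨hKsub p h hx1, ?_⟩
      rw [← hU'eq p h, ← hV'eq p h]
      exact hx2
    · refine ⟨∅, by simp, ?_, by simp, hord0⟩
      rw [hF'emp p h]
      simp
  · intro x
    set bad : Finset ℕ := (Finset.range N).filter (fun q => x ∉ E q) with hbaddef
    set W : Set X := ⋂ q ∈ bad, (E q)ᶜ with hWdef
    have hWopen : IsOpen W := isOpen_biInter_finset (fun q _ => (hEcl q).isOpen_compl)
    have hxW : x ∈ W := by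
      rw [hWdef]
      refine mem_iInter₂.2 ?_
      intro q hq
      exact (Finset.mem_filter.1 hq).2
    refine ⟨W, hWopen.mem_nhds hxW, ?_⟩
    have key : ∀ r ∈ {p : ℕ | (W ∩ E p).Nonempty}, r < N ∧ x ∈ E r := by
      intro r hr
      obtain ⟨z, hzW, hzE⟩ := hr
      have hrN : r < N := by
        by_contra hc
        rw [hEemp r hc] at hzE
        exact hzE
      refine ⟨hrN, ?_⟩
      by_contra hc
      have hrbad : r ∈ bad := Finset.mem_filter.2 ⟨Finset.mem_range.2 hrN, hc⟩
      have : z ∈ (E r)ᶜ := mem_iInter₂.1 hzW r hrbad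
      exact this hzE
    intro p hp q hq
    obtain ⟨hpN, hxp⟩ := key p hp
    obtain ⟨hqN, hxq⟩ := key q hq
    by_contra hne
    exact hEdisj p q hne x hxp hxq
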